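/- arXiv:0706.2455 — 3 statements merged into one kernel-verified Lean document; each statement's English description precedes it below -/
import Mathlib

section
/- Let 𝔞 be a nonzero fractional ideal of L and 𝔞^∨ its trace dual. Fix τ = (τ₁,…,τ_g) ∈ ℍ^g and let φ_τ : 𝔞^∨ ⊕ 𝔞 → ℂ^g be the additive map (a',a) ↦ (σ_k(a') + σ_k(a)τ_k)_{1≤k≤g}. Then φ_τ is injective, and for any ℤ-bases (α'₁,…,α'_g) of 𝔞^∨ and (α₁,…,α_g) of 𝔞, the 2g vectors φ_τ(α'_j,0), φ_τ(0,α_j) (1 ≤ j ≤ g) form a basis of ℂ^g viewed as a 2g-dimensional real vector space; equivalently, the ℝ-linear extension φ_τ ⊗ ℝ : (𝔞^∨ ⊕ 𝔞) ⊗_ℤ ℝ → ℂ^g is an isomorphism of real vector spaces. -/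
open NumberField
open scoped nonZeroDivisors

/-- The trace dual `𝔞^∨ = {x ∈ L : Tr_{L/ℚ}(x·a) ∈ ℤ for all a ∈ 𝔞}` of a set `𝔞 ⊆ L`. -/
def traceDualSet (L : Type*) [Field L] [NumberField L] (S : Set L) : Set L :=
  {x | ∀ a ∈ S, ∃ n : ℤ, Algebra.trace ℚ L (x * a) = (n : ℚ)}

/-- `IsZBasisOf α S`: the family `α` is a ℤ-basis of the subset `S` of `L`. -/
def IsZBasisOf {L : Type*} [Field L] [NumberField L] {ι : Type*} (α : ι → L) (S : Set L) : Prop :=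
  (∀ j, α j ∈ S) ∧ LinearIndependent ℤ α ∧ ∀ x ∈ S, x ∈ Submodule.span ℤ (Set.range α)

private lemma sigma_det_ne_zero {L : Type*} [Field L] [NumberField L] {g : ℕ}
    (σ : Fin g → (L →+* ℝ)) (hσ : Function.Bijective σ)
    (hdeg : Module.finrank ℚ L = g) {b : Fin g → L} (hb : LinearIndependent ℚ b) :
    (Matrix.of fun k j : Fin g => σ k (b j)).det ≠ 0 := by
  have hg : 0 < g := hdeg ▸ Module.finrank_pos
  have : Nonempty (Fin g) := ⟨⟨0, hg⟩⟩
  have hcard : Fintype.card (Fin g) = Module.finrank ℚ L := by simp [hdeg]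
  let B : Module.Basis (Fin g) ℚ L := basisOfLinearIndependentOfCardEqFinrank hb hcard
  have hBb : ⇑B = b := coe_basisOfLinearIndependentOfCardEqFinrank hb hcard
  let f : Fin g → (L →ₐ[ℚ] ℂ) := fun k =>
    RingHom.equivRatAlgHom L ℂ ((algebraMap ℝ ℂ).comp (σ k))
  have hfinj : Function.Injective f := by
    intro i j hij
    apply hσ.1
    have h2 : (algebraMap ℝ ℂ).comp (σ i) = (algebraMap ℝ ℂ).comp (σ j) :=
      (RingHom.equivRatAlgHom L ℂ).injective hij
    ext x
    exact Complex.ofReal_injective (RingHom.congr_fun h2 x)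
  have hfbij : Function.Bijective f := by
    rw [Fintype.bijective_iff_injective_and_card]
    refine ⟨hfinj, ?_⟩
    rw [AlgHom.card ℚ L ℂ, hdeg, Fintype.card_fin]
  let e : Fin g ≃ (L →ₐ[ℚ] ℂ) := Equiv.ofBijective f hfbij
  have hdisc : Algebra.discr ℚ b ≠ 0 := by
    have := Algebra.discr_not_zero_of_basis ℚ B
    rwa [hBb] at this
  have hdet : (Algebra.embeddingsMatrixReindex ℚ ℂ b e).det ≠ 0 := by
    intro h0
    apply hdisc
    have h1 := Algebra.discr_eq_det_embeddingsMatrixReindex_pow_two ℚ ℂ b e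
    rw [h0] at h1
    simpa using h1
  have hmap : (Matrix.of fun k j : Fin g => σ k (b j)).map (algebraMap ℝ ℂ)
      = (Algebra.embeddingsMatrixReindex ℚ ℂ b e).transpose := by
    ext k j
    simp only [Matrix.map_apply, Matrix.of_apply, Matrix.transpose_apply,
      Algebra.embeddingsMatrixReindex, Matrix.reindex_apply, Matrix.submatrix_apply,
      Equiv.refl_symm, Equiv.refl_apply, Equiv.symm_symm, Algebra.embeddingsMatrix_apply]
    show (algebraMap ℝ ℂ) (σ k (b j)) = e k (b j)
    show (algebraMap ℝ ℂ) (σ k (b j)) = f k (b j)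
    rfl
  intro h0
  apply hdet
  have : ((Matrix.of fun k j : Fin g => σ k (b j)).map (algebraMap ℝ ℂ)).det = 0 := by
    rw [show (Matrix.of fun k j : Fin g => σ k (b j)).map (algebraMap ℝ ℂ)
        = (algebraMap ℝ ℂ).mapMatrix (Matrix.of fun k j : Fin g => σ k (b j)) from rfl,
      ← RingHom.map_det, h0, map_zero]
  rw [hmap, Matrix.det_transpose] at this
  exact this

private lemma combo_zero {L : Type*} [Field L] [NumberField L] {g : ℕ}
    (σ : Fin g → (L →+* ℝ)) (hσ : Function.Bijective σ)
    (hdeg : Module.finrank ℚ L = g) {b : Fin g → L} (hb : LinearIndependent ℚ b)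
    (d : Fin g → ℝ) (hd : ∀ k, ∑ j, d j * σ k (b j) = 0) : d = 0 := by
  apply Matrix.eq_zero_of_mulVec_eq_zero (sigma_det_ne_zero σ hσ hdeg hb)
  funext k
  simpa [Matrix.mulVec, dotProduct, mul_comm] using hd k

/-- for `τ ∈ ℍ^g`, the map `φ_τ(a',a) = (σ_k(a') + σ_k(a)τ_k)_k` is injective on
`Π = 𝔞^∨ ⊕ 𝔞`, and for ℤ-bases `(α'_j)` of `𝔞^∨` and `(α_j)` of `𝔞`, the `2g` vectors
`φ_τ(α'_j,0)`, `φ_τ(0,α_j)` form a basis of `ℂ^g` as a real vector space. -/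
theorem phi_tau_injective_and_real_basis
    (L : Type*) [Field L] [NumberField L] (g : ℕ)
    (σ : Fin g → (L →+* ℝ)) (hσ : Function.Bijective σ)
    (hdeg : Module.finrank ℚ L = g)
    (𝔞 : FractionalIdeal (𝓞 L)⁰ L) (h𝔞 : 𝔞 ≠ 0)
    (τ : Fin g → ℂ) (hτ : ∀ k, 0 < (τ k).im)
    (φ : L × L → (Fin g → ℂ))
    (hφ : ∀ p k, φ p k = (σ k p.1 : ℂ) + (σ k p.2 : ℂ) * τ k) :
    (∀ p q : L × L,
      p.1 ∈ traceDualSet L (𝔞 : Set L) → p.2 ∈ (𝔞 : Set L) →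
      q.1 ∈ traceDualSet L (𝔞 : Set L) → q.2 ∈ (𝔞 : Set L) →
      φ p = φ q → p = q) ∧
    (∀ α' α : Fin g → L,
      IsZBasisOf α' (traceDualSet L (𝔞 : Set L)) → IsZBasisOf α (𝔞 : Set L) →
      LinearIndependent ℝ
        (Sum.elim (fun j => φ (α' j, 0)) (fun j => φ (0, α j)) :
          Fin g ⊕ Fin g → (Fin g → ℂ)) ∧
      Submodule.span ℝ
        (Set.range (Sum.elim (fun j => φ (α' j, 0)) (fun j => φ (0, α j)) :
          Fin g ⊕ Fin g → (Fin g → ℂ))) = ⊤) := by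
  have hg : 0 < g := hdeg ▸ Module.finrank_pos
  let k0 : Fin g := ⟨0, hg⟩
  constructor
  · intro p q _ _ _ _ hpq
    have h1 : ∀ k, (σ k p.1 : ℂ) + (σ k p.2 : ℂ) * τ k
        = (σ k q.1 : ℂ) + (σ k q.2 : ℂ) * τ k := by
      intro k
      rw [← hφ p k, ← hφ q k, hpq]
    have h2 : ∀ k, σ k p.2 = σ k q.2 := by
      intro k
      have := congrArg Complex.im (h1 k)
      simp only [Complex.add_im, Complex.ofReal_im, Complex.mul_im, Complex.ofReal_re,
        Complex.ofReal_im, zero_mul, add_zero, zero_add] at this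
      exact mul_right_cancel₀ (ne_of_gt (hτ k)) this
    have hp2 : p.2 = q.2 := (σ k0).injective (h2 k0)
    have hp1 : p.1 = q.1 := by
      have h3 := h1 k0
      rw [h2 k0] at h3
      have h4 : (σ k0 p.1 : ℂ) = (σ k0 q.1 : ℂ) := add_right_cancel h3
      exact (σ k0).injective (Complex.ofReal_inj.mp h4)
    exact Prod.ext hp1 hp2
  · intro α' α hα' hα
    have hli' : LinearIndependent ℚ α' := (LinearIndependent.iff_fractionRing ℤ ℚ).mp hα'.2.1
    have hli : LinearIndependent ℚ α := (LinearIndependent.iff_fractionRing ℤ ℚ).mp hα.2.1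
    have hLI : LinearIndependent ℝ
        (Sum.elim (fun j => φ (α' j, 0)) (fun j => φ (0, α j)) :
          Fin g ⊕ Fin g → (Fin g → ℂ)) := by
      rw [Fintype.linearIndependent_iff]
      intro c hc
      have hck : ∀ k, (↑(∑ j, c (Sum.inl j) * σ k (α' j)) : ℂ)
          + ↑(∑ j, c (Sum.inr j) * σ k (α j)) * τ k = 0 := by
        intro k
        have h0 := congrFun hc k
        simp only [Finset.sum_apply, Pi.smul_apply, Fintype.sum_sum_type, Sum.elim_inl,
          Sum.elim_inr, hφ, map_zero, Complex.ofReal_zero, zero_mul, add_zero, zero_add,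
          Complex.real_smul, Pi.zero_apply] at h0
        push_cast
        rw [Finset.sum_mul]
        simpa [mul_assoc] using h0
      have hinr : ∀ j, c (Sum.inr j) = 0 := by
        have : (fun j => c (Sum.inr j)) = 0 := by
          apply combo_zero σ hσ hdeg hli
          intro k
          have := congrArg Complex.im (hck k)
          simp only [Complex.add_im, Complex.ofReal_im, Complex.mul_im, Complex.ofReal_re,
            zero_mul, add_zero, zero_add, Complex.zero_im] at this
          rcases mul_eq_zero.mp this with h | h
          · exact h
          · exact absurd h (ne_of_gt (hτ k))
        exact fun j => congrFun this j
      have hinl : ∀ j, c (Sum.inl j) = 0 := by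
        have : (fun j => c (Sum.inl j)) = 0 := by
          apply combo_zero σ hσ hdeg hli'
          intro k
          have h3 := hck k
          have hz : (∑ j, c (Sum.inr j) * σ k (α j)) = 0 := by
            simp [hinr]
          rw [hz] at h3
          simp only [Complex.ofReal_zero, zero_mul, add_zero, Complex.ofReal_eq_zero] at h3
          exact h3
        exact fun j => congrFun this j
      intro i
      cases i with
      | inl j => exact hinl j
      | inr j => exact hinr j
    have hcard : Fintype.card (Fin g ⊕ Fin g) = Module.finrank ℝ (Fin g → ℂ) := by
      simp only [Fintype.card_sum, Fintype.card_fin, Module.finrank_pi_fintype,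
        Complex.finrank_real_complex, Finset.sum_const, Finset.card_univ, Fintype.card_fin,
        smul_eq_mul]
      omega
    have : Nonempty (Fin g ⊕ Fin g) := ⟨Sum.inl k0⟩
    exact ⟨hLI, hLI.span_eq_top_of_card_eq_finrank hcard⟩
end

section
/- Assume g ≥ 2, let N ≥ 3 be an integer and U_{L,N} the group of units of O_L congruent to 1 modulo N·O_L. If (n₁,…,n_g) ∈ ℕ^g is a tuple of nonnegative integers that are not all equal, then there exists ε ∈ U_{L,N} such that Π_{k=1}^{g} σ_k(ε)^{n_k} ≠ 1. -/
open NumberField NumberField.Units NumberField.Units.dirichletUnitTheorem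

/-- if `g ≥ 2` and `(n₁,…,n_g)` are nonnegative integers not all equal, then
there is a unit `ε ≡ 1 (mod N·O_L)` with `Π_k σ_k(ε)^{n_k} ≠ 1`. -/
theorem exists_unit_with_nontrivial_character
    (L : Type*) [Field L] [NumberField L] (g : ℕ) (hg : 2 ≤ g)
    (σ : Fin g → (L →+* ℝ)) (hσ : Function.Bijective σ)
    (hdeg : Module.finrank ℚ L = g)
    (N : ℕ) (hN : 3 ≤ N)
    (n : Fin g → ℕ) (hn : ∃ i j, n i ≠ n j) :
    ∃ ε : (𝓞 L)ˣ, ((ε : 𝓞 L) - 1) ∈ Ideal.span {(N : 𝓞 L)} ∧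
      ∏ k : Fin g, (σ k ((ε : 𝓞 L) : L)) ^ (n k) ≠ 1 := by
  classical
  by_contra hcon
  push_neg at hcon
  -- complex embeddings
  set φ : Fin g → (L →+* ℂ) := fun k => Complex.ofRealHom.comp (σ k) with hφdef
  have hφinj : Function.Injective φ := by
    intro i j h
    apply hσ.injective
    ext x
    have := congrArg (fun f => f x) h
    simpa [φ, Complex.ofReal_inj] using this
  have hφreal : ∀ k, ComplexEmbedding.IsReal (φ k) := by
    intro k
    rw [ComplexEmbedding.isReal_iff]
    ext x
    simp [ComplexEmbedding.conjugate_coe_eq, φ, Complex.conj_ofReal]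
  have hφsurj : Function.Surjective φ := by
    have hcard : Fintype.card (L →+* ℂ) = g := by
      rw [NumberField.Embeddings.card L ℂ, hdeg]
    exact ((Fintype.bijective_iff_injective_and_card φ).mpr
      ⟨hφinj, by simp [hcard]⟩).surjective
  -- infinite places
  set ψ : Fin g → InfinitePlace L := fun k => InfinitePlace.mk (φ k) with hψdef
  have hψinj : Function.Injective ψ := by
    intro i j h
    apply hφinj
    rcases InfinitePlace.mk_eq_iff.mp h with h' | h'
    · exact h'
    · rw [← h', ComplexEmbedding.isReal_iff.mp (hφreal i)]
  have hψsurj : Function.Surjective ψ := by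
    intro w
    obtain ⟨k, hk⟩ := hφsurj w.embedding
    exact ⟨k, by rw [hψdef]; simp only; rw [hk, InfinitePlace.mk_embedding]⟩
  have hreal : ∀ w : InfinitePlace L, InfinitePlace.IsReal w := by
    intro w
    obtain ⟨k, rfl⟩ := hψsurj w
    exact ⟨φ k, hφreal k, rfl⟩
  have hmult : ∀ w : InfinitePlace L, (InfinitePlace.mult w : ℝ) = 1 := by
    intro w
    rw [InfinitePlace.mult, if_pos (hreal w)]
    norm_num
  have hψval : ∀ k (x : L), ψ k x = |σ k x| := by
    intro k x
    rw [hψdef]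
    simp only [InfinitePlace.apply]
    simp [φ]
  -- the equivalence and the coefficients
  let e : Fin g ≃ InfinitePlace L := Equiv.ofBijective ψ ⟨hψinj, hψsurj⟩
  let c : InfinitePlace L → ℝ := fun w => (n (e.symm w) : ℝ)
  have hcψ : ∀ k, c (ψ k) = (n k : ℝ) := by
    intro k
    simp only [c]
    rw [show ψ k = e k from rfl, e.symm_apply_apply]
  -- step 1 : units in the congruence subgroup
  have step1 : ∀ u : (𝓞 L)ˣ, ((u : 𝓞 L) - 1) ∈ Ideal.span {(N : 𝓞 L)} →
      ∑ w : InfinitePlace L, c w * Real.log (w ((u : 𝓞 L) : L)) = 0 := by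
    intro u hu
    have h1 : ∏ k : Fin g, (σ k ((u : 𝓞 L) : L)) ^ (n k) = 1 := hcon u hu
    have hne : ∀ k : Fin g, σ k ((u : 𝓞 L) : L) ≠ 0 := by
      intro k
      simp only [ne_eq, map_eq_zero]
      exact RingOfIntegers.coe_ne_zero_iff.mpr (Units.ne_zero u)
    have h2 : ∑ k : Fin g, (n k : ℝ) * Real.log (|σ k ((u : 𝓞 L) : L)|) = 0 := by
      have := congrArg (fun x => Real.log |x|) h1
      simp only [abs_one, Real.log_one] at this
      rw [Finset.abs_prod, Real.log_prod] at this
      · simpa [abs_pow, Real.log_pow] using this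
      · intro k _
        exact abs_ne_zero.mpr (pow_ne_zero _ (hne k))
    rw [← Equiv.sum_comp e (fun w => c w * Real.log (w ((u : 𝓞 L) : L)))]
    rw [← h2]
    refine Finset.sum_congr rfl fun k _ => ?_
    rw [show e k = ψ k from rfl, hcψ, hψval]
  -- step 2 : every unit has a power in the congruence subgroup
  have hNne : (N : 𝓞 L) ≠ 0 := by
    exact_mod_cast Nat.cast_ne_zero.mpr (by omega)
  have hIbot : Ideal.span {(N : 𝓞 L)} ≠ ⊥ := by
    rw [Ne, Ideal.span_singleton_eq_bot]
    exact hNne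
  have : Finite (𝓞 L ⧸ Ideal.span {(N : 𝓞 L)}) :=
    Ideal.finiteQuotientOfFreeOfNeBot _ hIbot
  have step2 : ∀ u : (𝓞 L)ˣ, ∃ m : ℕ, 0 < m ∧
      (((u ^ m : (𝓞 L)ˣ) : 𝓞 L) - 1) ∈ Ideal.span {(N : 𝓞 L)} := by
    intro u
    set I := Ideal.span {(N : 𝓞 L)}
    let q := Units.map (Ideal.Quotient.mk I).toMonoidHom u
    refine ⟨orderOf q, orderOf_pos q, ?_⟩
    have hq : q ^ orderOf q = 1 := pow_orderOf_eq_one q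
    have : Ideal.Quotient.mk I ((u : 𝓞 L) ^ orderOf q) = 1 := by
      have := congrArg (fun x : (𝓞 L ⧸ I)ˣ => (x : 𝓞 L ⧸ I)) hq
      rw [Units.val_pow_eq_pow_val] at this
      rw [map_pow]; exact this
    rw [Units.val_pow_eq_pow_val]
    exact (Ideal.Quotient.eq (I := I)).mp (by rw [map_one]; exact this)
  -- step 3 : the linear form vanishes on all units
  have step3 : ∀ u : (𝓞 L)ˣ,
      ∑ w : InfinitePlace L, c w * Real.log (w ((u : 𝓞 L) : L)) = 0 := by
    intro u
    obtain ⟨m, hm, hmem⟩ := step2 u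
    have h := step1 (u ^ m) hmem
    have heq : ∀ w : InfinitePlace L,
        Real.log (w (((u ^ m : (𝓞 L)ˣ) : 𝓞 L) : L)) =
          m * Real.log (w ((u : 𝓞 L) : L)) := by
      intro w
      rw [Units.val_pow_eq_pow_val]
      push_cast
      rw [map_pow, Real.log_pow]
    rw [Finset.sum_congr rfl (fun w _ => by rw [heq w])] at h
    have : (m : ℝ) * ∑ w : InfinitePlace L, c w * Real.log (w ((u : 𝓞 L) : L)) = 0 := by
      rw [Finset.mul_sum]
      rw [← h]
      exact Finset.sum_congr rfl fun w _ => by ring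
    rcases mul_eq_zero.mp this with h' | h'
    · exact absurd h' (by positivity)
    · exact h'
  -- step 4 : conclude with the unit lattice spanning
  let W := {w : InfinitePlace L // w ≠ (w₀ : InfinitePlace L)}
  let f : (W → ℝ) →ₗ[ℝ] ℝ :=
    ∑ w : W, (c w.1 - c (w₀ : InfinitePlace L)) • LinearMap.proj w
  have hf : ∀ u : (𝓞 L)ˣ, f (logEmbedding L (Additive.ofMul u)) = 0 := by
    intro u
    have hfx : f (logEmbedding L (Additive.ofMul u)) =
        ∑ w : W, (c w.1 - c (w₀ : InfinitePlace L)) * Real.log (w.1 ((u : 𝓞 L) : L)) := by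
      simp only [f, LinearMap.sum_apply, LinearMap.smul_apply, LinearMap.proj_apply,
        smul_eq_mul, logEmbedding_component, hmult, one_mul,
        ← RingOfIntegers.coe_eq_algebraMap]
    -- sum over all places = sum over w ≠ w₀ plus w₀ term
    have hsum := step3 u
    have hsplit : ∑ w : InfinitePlace L, c w * Real.log (w ((u : 𝓞 L) : L)) =
        (∑ w : W, c w.1 * Real.log (w.1 ((u : 𝓞 L) : L))) +
          c (w₀ : InfinitePlace L) * Real.log ((w₀ : InfinitePlace L) ((u : 𝓞 L) : L)) := by
      rw [Fintype.sum_eq_sum_compl_add (w₀ : InfinitePlace L)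
        (fun w => c w * Real.log (w ((u : 𝓞 L) : L)))]
      congr 1
      refine Finset.sum_subtype _ (fun w => ?_) _
      rw [Finset.mem_compl, Finset.mem_singleton]
    have hlogsum : ∑ w : W, Real.log (w.1 ((u : 𝓞 L) : L)) =
        - Real.log ((w₀ : InfinitePlace L) ((u : 𝓞 L) : L)) := by
      have := sum_logEmbedding_component (K := L) u
      simp only [logEmbedding_component, hmult, one_mul, neg_mul] at this
      exact this
    rw [hfx]
    have expand : ∑ w : W, (c w.1 - c (w₀ : InfinitePlace L)) *
        Real.log (w.1 ((u : 𝓞 L) : L)) =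
        (∑ w : W, c w.1 * Real.log (w.1 ((u : 𝓞 L) : L))) -
          c (w₀ : InfinitePlace L) * ∑ w : W, Real.log (w.1 ((u : 𝓞 L) : L)) := by
      rw [Finset.mul_sum, ← Finset.sum_sub_distrib]
      exact Finset.sum_congr rfl fun w _ => by ring
    rw [expand, hlogsum]
    rw [hsplit] at hsum
    linarith
  have hker : Submodule.span ℝ (unitLattice L : Set (W → ℝ)) ≤ LinearMap.ker f := by
    rw [Submodule.span_le]
    intro x hx
    obtain ⟨u, -, rfl⟩ := hx
    exact hf u
  rw [unitLattice_span_eq_top] at hker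
  have hf0 : f = 0 := LinearMap.ker_eq_top.mp (top_le_iff.mp hker)
  -- extract that c is constant
  have hcconst : ∀ w : InfinitePlace L, c w = c (w₀ : InfinitePlace L) := by
    intro w
    by_cases hw : w = (w₀ : InfinitePlace L)
    · rw [hw]
    · have := congrArg (fun F => F (Pi.single (⟨w, hw⟩ : W) (1 : ℝ))) hf0
      simp only [f, LinearMap.sum_apply, LinearMap.smul_apply, LinearMap.proj_apply,
        smul_eq_mul, LinearMap.zero_apply] at this
      rw [Finset.sum_eq_single (⟨w, hw⟩ : W)] at this
      · rw [Pi.single_eq_same, mul_one] at this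
        exact sub_eq_zero.mp this
      · intro b _ hb
        rw [Pi.single_eq_of_ne hb, mul_zero]
      · intro h
        exact absurd (Finset.mem_univ _) h
  obtain ⟨i, j, hij⟩ := hn
  apply hij
  have : c (ψ i) = c (ψ j) := by rw [hcconst (ψ i), hcconst (ψ j)]
  rw [hcψ, hcψ] at this
  exact_mod_cast this
end

section
/- Let N ≥ 3 be an integer, U_{L,N} the group of units of O_L congruent to 1 modulo N·O_L, and l ≥ 0 an integer. Let V be the complex vector space with basis (e_n) indexed by the tuples n = (n₁,…,n_g) ∈ ℕ^g with n₁ + ⋯ + n_g = l, on which U_{L,N} acts linearly by ε · e_n = ( Π_{k=1}^{g} σ_k(ε)^{-n_k} ) e_n. Then the space of coinvariants V / span{ v − ε·v : v ∈ V, ε ∈ U_{L,N} } has dimension 1 if g divides l (spanned by the class of e_{(l/g,…,l/g)}) and dimension 0 otherwise. (This is the arithmetic-group cohomology computation underlying Proposition 3.1 on the degeneration space H^{2g-1} i_∞^* j_* (Sym^l ℋ)(g).) -/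
set_option maxHeartbeats 1000000
set_option synthInstance.maxHeartbeats 400000


open NumberField

/-- The complex vector space with basis indexed by tuples `n ∈ ℕ^g` with `n₁ + ⋯ + n_g = l`. -/
abbrev tupleSpace (g l : ℕ) : Type := {n : Fin g → ℕ // ∑ i, n i = l} →₀ ℂ

section Aux

open NumberField.InfinitePlace NumberField.Units NumberField.Units.dirichletUnitTheorem
open Module

variable {L : Type*} [Field L] [NumberField L] {g : ℕ}
  (σ : Fin g → (L →+* ℝ)) (hσ : Function.Bijective σ)
  (hdeg : Module.finrank ℚ L = g)

/-- norm of a unit congruent to 1 mod N (N ≥ 3) is 1 -/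
lemma aux_norm_one (ε : (𝓞 L)ˣ) (N : ℕ) (hN : 3 ≤ N)
    (hε : ((ε : 𝓞 L) - 1) ∈ Ideal.span {(N : 𝓞 L)}) :
    Algebra.norm ℤ (ε : 𝓞 L) = 1 := by
  haveI : NeZero N := ⟨by omega⟩
  obtain ⟨a, ha⟩ := Ideal.mem_span_singleton'.mp hε
  have hεa : (ε : 𝓞 L) = 1 + N • a := by
    rw [nsmul_eq_mul]; push_cast; linear_combination ha.symm
  have hcast : ((Algebra.norm ℤ (ε : 𝓞 L) : ℤ) : ZMod N) = 1 := by
    let b := Module.Free.chooseBasis ℤ (𝓞 L)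
    rw [Algebra.norm_eq_matrix_det b]
    have hdet := RingHom.map_det (Int.castRingHom (ZMod N)) (Algebra.leftMulMatrix b ((ε : 𝓞 L)))
    have hm : (Int.castRingHom (ZMod N)).mapMatrix (Algebra.leftMulMatrix b ((ε : 𝓞 L))) = 1 := by
      rw [RingHom.mapMatrix_apply]
      rw [hεa, map_add, map_one, map_nsmul]
      ext i j
      simp only [Matrix.map_apply, Matrix.add_apply, Matrix.smul_apply, Int.coe_castRingHom]
      push_cast
      simp [ZMod.natCast_self, Matrix.one_apply, apply_ite (Int.cast : ℤ → ZMod N)]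
    rw [show ((((Algebra.leftMulMatrix b) ((ε : 𝓞 L))).det : ℤ) : ZMod N) =
      (Int.castRingHom (ZMod N)) ((Algebra.leftMulMatrix b) ((ε : 𝓞 L))).det from rfl, hdet, hm,
      Matrix.det_one]
  have hu : IsUnit (Algebra.norm ℤ (ε : 𝓞 L)) := (IsUnit.map (Algebra.norm ℤ) ε.isUnit)
  rcases Int.isUnit_iff.mp hu with h | h
  · exact h
  · exfalso
    rw [h] at hcast
    have h2 : ((2 : ℕ) : ZMod N) = 0 := by push_cast; linear_combination -hcast
    have hdvd := (ZMod.natCast_eq_zero_iff 2 N).mp h2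
    have := Nat.le_of_dvd (by norm_num) hdvd
    omega

/-- existence of a power landing in the congruence subgroup -/
lemma aux_pow_mem (N : ℕ) (hN : 3 ≤ N) (u : (𝓞 L)ˣ) :
    ∃ p : ℕ, 0 < p ∧ ((u ^ p : (𝓞 L)ˣ) : 𝓞 L) - 1 ∈ Ideal.span {(N : 𝓞 L)} := by
  set I := Ideal.span {(N : 𝓞 L)}
  have hfin : Finite (𝓞 L ⧸ I) := by
    have : (N : 𝓞 L) ≠ 0 := by exact_mod_cast Nat.cast_ne_zero.mpr (by omega)
    have := Ideal.finiteQuotientOfFreeOfNeBot (S := 𝓞 L) I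
      (by simpa [I, Ideal.span_singleton_eq_bot] using this)
    exact this
  haveI : Finite ((𝓞 L) ⧸ I)ˣ := inferInstance
  let u' : ((𝓞 L) ⧸ I)ˣ := Units.map (Ideal.Quotient.mk I).toMonoidHom u
  refine ⟨Nat.card ((𝓞 L ⧸ I)ˣ), Nat.card_pos, ?_⟩
  have h1 : u' ^ (Nat.card ((𝓞 L ⧸ I)ˣ)) = 1 := pow_card_eq_one'
  have h2 : Ideal.Quotient.mk I ((u ^ (Nat.card ((𝓞 L ⧸ I)ˣ)) : (𝓞 L)ˣ) : 𝓞 L) = 1 := by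
    have := congrArg (Units.val) h1
    simp only [u', Units.val_pow_eq_pow_val, Units.coe_map, RingHom.toMonoidHom_eq_coe,
      MonoidHom.coe_coe, Units.val_one] at this
    simpa using this
  have h3 : Ideal.Quotient.mk I ((u ^ (Nat.card ((𝓞 L ⧸ I)ˣ)) : (𝓞 L)ˣ) : 𝓞 L) =
      Ideal.Quotient.mk I 1 := by simpa using h2
  simpa using (Ideal.Quotient.eq).mp h3

include hσ hdeg in
/-- the τ's (complexifications of the σ's) enumerate all complex embeddings -/
lemma aux_tau_bij :
    Function.Bijective (fun k : Fin g => Complex.ofRealHom.comp (σ k)) := by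
  refine (Fintype.bijective_iff_injective_and_card _).mpr ⟨?_, ?_⟩
  · intro k k' h
    apply hσ.injective
    ext x
    have := congrArg (fun f : L →+* ℂ => f x) h
    simpa using Complex.ofReal_injective this
  · rw [Fintype.card_fin, NumberField.Embeddings.card L ℂ, hdeg]

include hσ hdeg in
/-- product of the σ's equals the norm -/
lemma aux_prod_eq_norm (x : L) :
    ∏ k, σ k x = (Algebra.norm ℚ x : ℝ) := by
  apply Complex.ofReal_injective
  have h1 := Algebra.norm_eq_prod_embeddings (K := ℚ) (E := ℂ) x
  have h2 : ∏ φ : L →ₐ[ℚ] ℂ, φ x = ∏ ψ : L →+* ℂ, ψ x :=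
    (Fintype.prod_equiv (RingHom.equivRatAlgHom L ℂ) (fun ψ => ψ x) (fun φ => φ x)
      (fun ψ => rfl)).symm
  have h3 : ∏ ψ : L →+* ℂ, ψ x = ∏ k, (Complex.ofRealHom.comp (σ k)) x :=
    (Fintype.prod_bijective _ (aux_tau_bij σ hσ hdeg) _ _ (fun k => rfl)).symm
  have : (algebraMap ℚ ℂ) (Algebra.norm ℚ x) = ((Algebra.norm ℚ x : ℝ) : ℂ) := by
    rw [eq_ratCast]
    norm_cast
  rw [← this, h1, h2, h3]
  push_cast
  rfl

include hσ hdeg in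
/-- for units in the congruence subgroup, the product of the σ's is 1 -/
lemma aux_prod_sigma_one (N : ℕ) (hN : 3 ≤ N) (ε : (𝓞 L)ˣ)
    (hε : ((ε : 𝓞 L) - 1) ∈ Ideal.span {(N : 𝓞 L)}) :
    ∏ k, σ k ((ε : 𝓞 L) : L) = 1 := by
  rw [aux_prod_eq_norm σ hσ hdeg]
  rw [← Algebra.coe_norm_int, aux_norm_one ε N hN hε]
  norm_num

include hσ hdeg in
/-- for any unit, the sum of logs of the absolute values under the σ's is 0 -/
lemma aux_sum_log_zero (u : (𝓞 L)ˣ) :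
    ∑ k, Real.log |σ k ((u : 𝓞 L) : L)| = 0 := by
  have hne : ((u : 𝓞 L) : L) ≠ 0 := by
    simpa using (RingOfIntegers.coe_ne_zero_iff (K := L)).mpr u.ne_zero
  have habs : ∏ k, |σ k ((u : 𝓞 L) : L)| = 1 := by
    rw [← Finset.abs_prod, aux_prod_eq_norm σ hσ hdeg, ← Algebra.coe_norm_int]
    have hu := Int.isUnit_iff.mp (IsUnit.map (Algebra.norm ℤ) u.isUnit)
    rcases hu with h | h <;> rw [h] <;> norm_num
  rw [← Real.log_prod (fun k _ => abs_ne_zero.mpr (map_ne_zero (σ k) |>.mpr hne)), habs,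
    Real.log_one]

include hσ hdeg in
/-- KEY (Dirichlet): if the weighted sum of logs vanishes for all units, the weights are equal -/
lemma aux_dirichlet (n : Fin g → ℕ)
    (H : ∀ u : (𝓞 L)ˣ, ∑ k, (n k : ℝ) * Real.log |σ k ((u : 𝓞 L) : L)| = 0) :
    ∀ i j, n i = n j := by
  classical
  set τ : Fin g → (L →+* ℂ) := fun k => Complex.ofRealHom.comp (σ k) with hτ
  have hτbij : Function.Bijective τ := aux_tau_bij σ hσ hdeg
  set e : Fin g → InfinitePlace L := fun k => InfinitePlace.mk (τ k) with he
  have he_apply : ∀ k (x : L), e k x = |σ k x| := by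
    intro k x
    rw [show e k x = ‖(Complex.ofRealHom (σ k x))‖ from rfl]
    exact (Complex.norm_real _).trans (Real.norm_eq_abs _)
  have hτreal : ∀ k, ComplexEmbedding.IsReal (τ k) := by
    intro k
    rw [ComplexEmbedding.isReal_iff]
    ext x
    simp [hτ, ComplexEmbedding.conjugate_coe_eq, Complex.conj_ofReal]
  have hebij : Function.Bijective e := by
    constructor
    · intro k k' h
      apply hτbij.injective
      rcases InfinitePlace.mk_eq_iff.mp h with h' | h'
      · exact h'
      · rwa [ComplexEmbedding.isReal_iff.mp (hτreal k)] at h'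
    · intro w
      obtain ⟨k, hk⟩ := hτbij.surjective (InfinitePlace.embedding w)
      exact ⟨k, by rw [show e k = InfinitePlace.mk (τ k) from rfl, hk,
        InfinitePlace.mk_embedding]⟩
  have hreal : ∀ w : InfinitePlace L, InfinitePlace.IsReal w := by
    intro w
    obtain ⟨k, rfl⟩ := hebij.surjective w
    exact InfinitePlace.isReal_mk_iff.mpr (hτreal k)
  have hmult : ∀ w : InfinitePlace L, (InfinitePlace.mult w : ℝ) = 1 := by
    intro w; rw [InfinitePlace.mult, if_pos (hreal w)]; norm_num
  set eE : Fin g ≃ InfinitePlace L := Equiv.ofBijective e hebij with heE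
  set m : InfinitePlace L → ℝ := fun w => (n (eE.symm w) : ℝ) with hm
  have hme : ∀ k, m (e k) = (n k : ℝ) := by
    intro k
    have : eE.symm (eE k) = k := Equiv.symm_apply_apply _ _
    simp only [hm]
    rw [show e k = eE k from rfl, this]
  -- transferred hypotheses
  have Hm : ∀ u : (𝓞 L)ˣ, ∑ w, m w * Real.log (w ((u : 𝓞 L) : L)) = 0 := by
    intro u
    have hb := Fintype.sum_bijective e hebij
      (fun k => m (e k) * Real.log (e k ((u : 𝓞 L) : L)))
      (fun w => m w * Real.log (w ((u : 𝓞 L) : L))) (fun k => rfl)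
    rw [← hb]
    rw [show ∑ k, m (e k) * Real.log (e k ((u : 𝓞 L) : L))
        = ∑ k, (n k : ℝ) * Real.log |σ k ((u : 𝓞 L) : L)| from
      Finset.sum_congr rfl (fun k _ => by rw [hme, he_apply])]
    exact H u
  have Hm0 : ∀ u : (𝓞 L)ˣ, ∑ w : InfinitePlace L, Real.log (w ((u : 𝓞 L) : L)) = 0 := by
    intro u
    have hb := Fintype.sum_bijective e hebij
      (fun k => Real.log (e k ((u : 𝓞 L) : L)))
      (fun w : InfinitePlace L => Real.log (w ((u : 𝓞 L) : L))) (fun k => rfl)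
    rw [← hb]
    rw [show ∑ k, Real.log (e k ((u : 𝓞 L) : L))
        = ∑ k, Real.log |σ k ((u : 𝓞 L) : L)| from
      Finset.sum_congr rfl (fun k _ => by rw [he_apply])]
    exact aux_sum_log_zero σ hσ hdeg u
  -- the functional
  set F : ({w : InfinitePlace L // w ≠ w₀} → ℝ) →ₗ[ℝ] ℝ :=
    { toFun := fun y => ∑ w, (m w.1 - m w₀) * y w
      map_add' := by intros; simp [mul_add, Finset.sum_add_distrib]
      map_smul' := by
        intros c y
        simp only [Pi.smul_apply, smul_eq_mul, RingHom.id_apply, Finset.mul_sum]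
        exact Finset.sum_congr rfl (fun w _ => by ring) } with hF
  -- subtype sums
  have hsub : ∀ f : InfinitePlace L → ℝ,
      ∑ w : {w : InfinitePlace L // w ≠ w₀}, f w.1 = (∑ w, f w) - f w₀ := by
    intro f
    rw [← Finset.sum_erase_eq_sub (Finset.mem_univ w₀)]
    exact (Finset.sum_subtype (Finset.univ.erase w₀)
      (fun w => by simp [Finset.mem_erase]) f).symm
  have hFvan : ∀ u : (𝓞 L)ˣ, F (logEmbedding L (Additive.ofMul u)) = 0 := by
    intro u
    have : F (logEmbedding L (Additive.ofMul u))
        = ∑ w : {w : InfinitePlace L // w ≠ w₀},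
            (m w.1 - m w₀) * Real.log (w.1 ((u : 𝓞 L) : L)) := by
      simp only [hF, LinearMap.coe_mk, AddHom.coe_mk]
      refine Finset.sum_congr rfl (fun w _ => ?_)
      rw [logEmbedding_component, hmult w.1, one_mul]
    rw [this]
    have expand : ∀ w : InfinitePlace L,
        (m w - m w₀) * Real.log (w ((u : 𝓞 L) : L))
        = m w * Real.log (w ((u : 𝓞 L) : L)) - m w₀ * Real.log (w ((u : 𝓞 L) : L)) := by
      intro w; ring
    rw [Finset.sum_congr rfl (fun w _ => expand w.1), Finset.sum_sub_distrib]
    rw [hsub (fun w => m w * Real.log (w ((u : 𝓞 L) : L)))]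
    rw [← Finset.mul_sum, hsub (fun w => Real.log (w ((u : 𝓞 L) : L)))]
    rw [Hm u, Hm0 u]
    ring
  have hker : Submodule.span ℝ ((unitLattice L : Set _)) ≤ LinearMap.ker F := by
    rw [Submodule.span_le]
    rintro x hx
    obtain ⟨u, -, rfl⟩ := hx
    exact hFvan (Additive.toMul u)
  rw [unitLattice_span_eq_top] at hker
  have hF0 : F = 0 := LinearMap.ker_eq_top.mp (top_le_iff.mp hker)
  have hconst : ∀ w : InfinitePlace L, m w = m w₀ := by
    intro w
    by_cases hw : w = w₀
    · rw [hw]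
    · have := congrArg (fun f : _ →ₗ[ℝ] ℝ => f (Pi.single (⟨w, hw⟩ : {w // w ≠ w₀}) 1)) hF0
      simp only [hF, LinearMap.coe_mk, AddHom.coe_mk, LinearMap.zero_apply] at this
      rw [Finset.sum_eq_single (⟨w, hw⟩ : {w // w ≠ w₀})] at this
      · simpa using sub_eq_zero.mp (by simpa using this)
      · intro b _ hb
        rw [Pi.single_eq_of_ne hb, mul_zero]
      · intro h; exact absurd (Finset.mem_univ _) h
  intro i j
  have : m (e i) = m (e j) := by rw [hconst (e i), hconst (e j)]
  rw [hme, hme] at this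
  exact_mod_cast this

include hσ hdeg in
/-- If the character is trivial on the congruence subgroup, the exponents are all equal. -/
lemma aux_key2 (N : ℕ) (hN : 3 ≤ N) (n : Fin g → ℕ)
    (hall : ∀ ε : (𝓞 L)ˣ, ((ε : 𝓞 L) - 1) ∈ Ideal.span {(N : 𝓞 L)} →
      ∏ k, ((σ k ((ε : 𝓞 L) : L) : ℂ)) ^ (-(n k : ℤ)) = 1) :
    ∀ i j, n i = n j := by
  apply aux_dirichlet σ hσ hdeg n
  intro u
  obtain ⟨p, hp, hpU⟩ := aux_pow_mem N hN u
  have h1 := hall (u ^ p) hpU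
  have hne : ((u : 𝓞 L) : L) ≠ 0 := by
    simpa using (RingOfIntegers.coe_ne_zero_iff (K := L)).mpr u.ne_zero
  have habs : ∏ k : Fin g, |σ k ((u : 𝓞 L) : L)| ^ (-(n k : ℤ) * p) = 1 := by
    have := congrArg (‖·‖) h1
    rw [norm_prod, norm_one] at this
    calc ∏ k : Fin g, |σ k ((u : 𝓞 L) : L)| ^ (-(n k : ℤ) * p)
        = ∏ k : Fin g, ‖(((σ k (((u ^ p : (𝓞 L)ˣ) : 𝓞 L) : L) : ℂ)) ^ (-(n k : ℤ)))‖ := by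
          refine Finset.prod_congr rfl (fun k _ => ?_)
          have hup : (((u ^ p : (𝓞 L)ˣ) : 𝓞 L) : L) = ((u : 𝓞 L) : L) ^ p := by push_cast; ring
          rw [hup, map_pow, Complex.ofReal_pow, norm_zpow, norm_pow, Complex.norm_real, Real.norm_eq_abs,
            ← zpow_natCast (|σ k ((u : 𝓞 L) : L)|) p, ← zpow_mul, mul_comm]
      _ = 1 := this
  have hlog : ∑ k, ((-(n k : ℤ) * p : ℤ) : ℝ) * Real.log |σ k ((u : 𝓞 L) : L)| = 0 := by
    have hnz : ∀ k ∈ Finset.univ, |σ k ((u : 𝓞 L) : L)| ^ (-(n k : ℤ) * p) ≠ 0 :=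
      fun k _ => zpow_ne_zero _ (abs_ne_zero.mpr (map_ne_zero (σ k) |>.mpr hne))
    have := congrArg Real.log habs
    rw [Real.log_prod hnz, Real.log_one] at this
    rw [← this]
    exact Finset.sum_congr rfl (fun k _ => (Real.log_zpow _ _).symm)
  have hps : (p : ℝ) ≠ 0 := Nat.cast_ne_zero.mpr (by omega)
  have : (-(p : ℝ)) * ∑ k, (n k : ℝ) * Real.log |σ k ((u : 𝓞 L) : L)| = 0 := by
    rw [Finset.mul_sum, ← hlog]
    refine Finset.sum_congr rfl (fun k _ => ?_)
    push_cast
    ring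
  rcases mul_eq_zero.mp this with h | h
  · exact absurd (by linarith [neg_eq_zero.mp h] : (p : ℝ) = 0) hps
  · exact h

end Aux

/-- with `U_{L,N}` acting on the space with basis `(e_n)_{Σn_k = l}` by
`ε · e_n = (Π_k σ_k(ε)^{-n_k}) e_n`, the coinvariants have dimension `1` if `g ∣ l`
(spanned by the class of `e_{(l/g,…,l/g)}`) and `0` otherwise. -/
theorem unit_coinvariants_dimension
    (L : Type*) [Field L] [NumberField L] (g : ℕ)
    (σ : Fin g → (L →+* ℝ)) (hσ : Function.Bijective σ)
    (hdeg : Module.finrank ℚ L = g)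
    (N : ℕ) (hN : 3 ≤ N) (l : ℕ)
    (act : (𝓞 L)ˣ → tupleSpace g l →ₗ[ℂ] tupleSpace g l)
    (hact : ∀ (ε : (𝓞 L)ˣ) (n : {n : Fin g → ℕ // ∑ i, n i = l}),
      act ε (Finsupp.single n 1) =
        Finsupp.single n (∏ k : Fin g, ((σ k ((ε : 𝓞 L) : L) : ℂ)) ^ (-(n.1 k : ℤ))))
    (W : Submodule ℂ (tupleSpace g l))
    (hW : W = Submodule.span ℂ
      {w : tupleSpace g l | ∃ (v : tupleSpace g l) (ε : (𝓞 L)ˣ),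
        ((ε : 𝓞 L) - 1) ∈ Ideal.span {(N : 𝓞 L)} ∧ w = v - act ε v}) :
    Module.finrank ℂ (tupleSpace g l ⧸ W) = (if g ∣ l then 1 else 0) ∧
    (g ∣ l → ∀ n0 : {n : Fin g → ℕ // ∑ i, n i = l}, (∀ i, n0.1 i = l / g) →
      ∀ x : tupleSpace g l ⧸ W, ∃ c : ℂ,
        x = c • Submodule.Quotient.mk (p := W) (Finsupp.single n0 1)) := by
  classical
  have hg : 0 < g := by
    have : 0 < Module.finrank ℚ L := Module.finrank_pos
    omega
  set ι := {n : Fin g → ℕ // ∑ i, n i = l} with hι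
  set χ : ι → (𝓞 L)ˣ → ℂ :=
    fun n ε => ∏ k : Fin g, ((σ k ((ε : 𝓞 L) : L) : ℂ)) ^ (-(n.1 k : ℤ)) with hχ
  set U : (𝓞 L)ˣ → Prop := fun ε => ((ε : 𝓞 L) - 1) ∈ Ideal.span {(N : 𝓞 L)} with hU
  -- the action is diagonal
  have act_apply : ∀ (ε : (𝓞 L)ˣ) (v : tupleSpace g l) (m : ι),
      (act ε v) m = χ m ε * v m := by
    intro ε v
    induction v using Finsupp.induction_linear with
    | zero => intro m; simp
    | add f h hf hh => intro m; simp [map_add, hf m, hh m, mul_add]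
    | single n c =>
      intro m
      have h1 : act ε (Finsupp.single n c) = c • Finsupp.single n (χ n ε) := by
        rw [show (Finsupp.single n c : tupleSpace g l) = c • Finsupp.single n 1 by
          simp [Finsupp.smul_single], map_smul, hact ε n]
      rw [h1]
      by_cases hmn : m = n
      · subst hmn; simp [Finsupp.single_apply, mul_comm]
      · simp [Finsupp.single_apply, Ne.symm hmn, hmn]
  -- the key set
  set T : Set ι := {n | ∃ ε : (𝓞 L)ˣ, U ε ∧ χ n ε ≠ 1} with hT
  -- W equals the functions supported on T
  have hWT : W = Finsupp.supported ℂ ℂ T := by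
    rw [hW]
    apply le_antisymm
    · rw [Submodule.span_le]
      rintro w ⟨v, ε, hεU, rfl⟩
      simp only [SetLike.mem_coe]
      rw [Finsupp.mem_supported']
      intro m hm
      have hχ1 : χ m ε = 1 := by
        by_contra hne
        exact hm ⟨ε, hεU, hne⟩
      simp [Finsupp.sub_apply, act_apply, hχ1]
    · rw [Finsupp.supported_eq_span_single, Submodule.span_le]
      rintro w ⟨n, hn, rfl⟩
      obtain ⟨ε, hεU, hεne⟩ := hn
      have hgen : (Finsupp.single n 1 : tupleSpace g l) - act ε (Finsupp.single n 1) ∈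
          Submodule.span ℂ {w : tupleSpace g l | ∃ (v : tupleSpace g l) (ε : (𝓞 L)ˣ),
            U ε ∧ w = v - act ε v} :=
        Submodule.subset_span ⟨Finsupp.single n 1, ε, hεU, rfl⟩
      have heq : (Finsupp.single n 1 : tupleSpace g l) - act ε (Finsupp.single n 1)
          = (1 - χ n ε) • Finsupp.single n 1 := by
        rw [hact ε n, sub_smul, one_smul, Finsupp.smul_single, smul_eq_mul, mul_one]
      have hne : (1 - χ n ε) ≠ 0 := sub_ne_zero.mpr (Ne.symm hεne)
      have := Submodule.smul_mem _ (1 - χ n ε)⁻¹ hgen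
      rw [heq, smul_smul, inv_mul_cancel₀ hne, one_smul] at this
      exact this
  -- evaluation at a point as linear map
  by_cases hdvd : g ∣ l
  · -- the constant tuple
    have hsum : ∑ _i : Fin g, l / g = l := by
      rw [Finset.sum_const, Finset.card_univ, Fintype.card_fin, smul_eq_mul]
      exact Nat.mul_div_cancel' hdvd
    set n0' : ι := ⟨fun _ => l / g, hsum⟩ with hn0'
    -- T is the complement of {n0'}
    have hTc : T = {n0'}ᶜ := by
      ext n
      simp only [hT, Set.mem_setOf_eq, Set.mem_compl_iff, Set.mem_singleton_iff]
      constructor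
      · rintro ⟨ε, hεU, hεne⟩ rfl
        apply hεne
        rw [hχ]
        have h1 := aux_prod_sigma_one σ hσ hdeg N hN ε hεU
        have : ∏ k : Fin g, ((σ k ((ε : 𝓞 L) : L) : ℂ)) ^ (-(l / g : ℤ)) = 1 := by
          rw [Finset.prod_zpow]
          rw [show ∏ k : Fin g, ((σ k ((ε : 𝓞 L) : L) : ℂ)) = ((1 : ℝ) : ℂ) by
            rw [← h1]; push_cast; rfl]
          simp
        simpa [hn0'] using this
      · intro hne
        by_contra hc
        push_neg at hc
        have hall : ∀ ε : (𝓞 L)ˣ, U ε → χ n ε = 1 := fun ε hε => hc ε hε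
        have hconst := aux_key2 σ hσ hdeg N hN n.1 (fun ε hε => hall ε hε)
        apply hne
        have hval : ∀ i, n.1 i = l / g := by
          intro i
          have hsum' : ∑ j, n.1 j = l := n.2
          have : ∑ j : Fin g, n.1 i = l :=
            (Finset.sum_congr rfl (fun j _ => hconst i j)).trans hsum'
          rw [Finset.sum_const, Finset.card_univ, Fintype.card_fin, smul_eq_mul] at this
          have h2 : g * n.1 i = g * (l / g) := this.trans (Nat.mul_div_cancel' hdvd).symm
          exact Nat.eq_of_mul_eq_mul_left hg h2
        exact Subtype.ext (funext hval)
    -- W is the kernel of evaluation at n0'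
    have hWker : W = LinearMap.ker (Finsupp.lapply (M := ℂ) (R := ℂ) n0') := by
      rw [hWT, hTc]
      ext v
      rw [Finsupp.mem_supported']
      simp only [LinearMap.mem_ker, Finsupp.lapply_apply]
      constructor
      · intro h; exact h n0' (by simp)
      · intro h x hx
        simp only [Set.mem_compl_iff, Set.mem_singleton_iff, not_not] at hx
        rwa [hx]
    have hsurj : Function.Surjective (Finsupp.lapply (M := ℂ) (R := ℂ) n0') := by
      intro c
      exact ⟨Finsupp.single n0' c, by simp⟩
    have hquot : Module.finrank ℂ (tupleSpace g l ⧸ W) = 1 := by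
      rw [hWker]
      rw [LinearEquiv.finrank_eq (LinearMap.quotKerEquivOfSurjective _ hsurj)]
      exact Module.finrank_self ℂ
    refine ⟨by rw [if_pos hdvd]; exact hquot, ?_⟩
    intro _ n0 hn0 x
    have hn0eq : n0 = n0' := Subtype.ext (funext hn0)
    obtain ⟨v, rfl⟩ := Submodule.Quotient.mk_surjective W x
    refine ⟨v n0', ?_⟩
    rw [hn0eq]
    rw [← Submodule.Quotient.mk_smul]
    rw [Submodule.Quotient.eq]
    rw [hWker]
    simp [Finsupp.smul_single]
  · -- T is everything
    have hTu : T = Set.univ := by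
      ext n
      simp only [hT, Set.mem_setOf_eq, Set.mem_univ, iff_true]
      by_contra hc
      push_neg at hc
      have hconst := aux_key2 σ hσ hdeg N hN n.1 (fun ε hε => hc ε hε)
      apply hdvd
      have : ∑ j : Fin g, n.1 ⟨0, hg⟩ = l :=
        (Finset.sum_congr rfl (fun j _ => hconst ⟨0, hg⟩ j)).trans n.2
      rw [Finset.sum_const, Finset.card_univ, Fintype.card_fin, smul_eq_mul] at this
      exact ⟨n.1 ⟨0, hg⟩, this.symm⟩
    have hWtop : W = ⊤ := by
      rw [hWT, hTu, Finsupp.supported_univ]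
    haveI : Subsingleton (tupleSpace g l ⧸ W) :=
      Submodule.Quotient.subsingleton_iff.mpr hWtop
    refine ⟨by rw [if_neg hdvd]; exact Module.finrank_zero_of_subsingleton, ?_⟩
    intro hdl
    exact absurd hdl hdvd
end
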